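/- Every cubical iterated graph system is of bounded geometry. -/

import Mathlib

namespace IGSP

/-- An iterated graph system: a finite connected oriented graph `G₁ = (S, E)`, a set of
types `T` with a surjective typing map on edges, and nonempty gluing rules `I_t ⊆ S × S`. -/
structure System (S T : Type) where
  E : S → S → Prop
  not_both : ∀ x y : S, E x y → ¬ E y x
  irrefl : ∀ x : S, ¬ E x x
  conn : ∀ x y : S, Relation.ReflTransGen (fun a b => E a b ∨ E b a) x y
  typ : S → S → T
  typ_surj : ∀ t : T, ∃ x y, E x y ∧ typ x y = t
  glue : T → S → S → Prop
  glue_nonempty : ∀ t : T, ∃ x y, glue t x y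

variable {S T : Type}

/-- Words of length `m` over the symbol set `S`. -/
abbrev Word (S : Type) (m : ℕ) := Fin m → S

open Classical in
/-- The replacement graphs together with their typing functions, defined by recursion on
the length of words: `G₁ = (S,E)` and an oriented edge `(w,v) ∈ E_{m+1}` holds iff either
the length-`m` prefixes agree and the last symbols form an edge of `G₁`, or the prefixes
form an edge of `E_m` and the last symbols belong to the gluing rule of its type. -/
noncomputable def replData [Nonempty T] (F : System S T) :
    (L : ℕ) → (Word S L → Word S L → Prop) × (Word S L → Word S L → T)
  | 0 => ⟨fun _ _ => False, fun _ _ => Classical.arbitrary T⟩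
  | 1 => ⟨fun w v => F.E (w 0) (v 0), fun w v => F.typ (w 0) (v 0)⟩
  | L + 2 =>
      ⟨fun w v =>
        (Fin.init w = Fin.init v ∧ F.E (w (Fin.last (L + 1))) (v (Fin.last (L + 1)))) ∨
        ((replData F (L + 1)).1 (Fin.init w) (Fin.init v) ∧
          F.glue ((replData F (L + 1)).2 (Fin.init w) (Fin.init v))
            (w (Fin.last (L + 1))) (v (Fin.last (L + 1)))),
       fun w v =>
        if Fin.init w = Fin.init v then F.typ (w (Fin.last (L + 1))) (v (Fin.last (L + 1)))
        else (replData F (L + 1)).2 (Fin.init w) (Fin.init v)⟩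

/-- The oriented edge relation of the replacement graph on words of length `L`. -/
def edge [Nonempty T] (F : System S T) (L : ℕ) (w v : Word S L) : Prop :=
  (replData F L).1 w v

/-- The typing function of the replacement graph on words of length `L`. -/
noncomputable def etyp [Nonempty T] (F : System S T) (L : ℕ) (w v : Word S L) : T :=
  (replData F L).2 w v

/-- The unoriented edge ("{w,v} ∈ E_L") relation. -/
def adjW [Nonempty T] (F : System S T) (L : ℕ) (w v : Word S L) : Prop :=
  edge F L w v ∨ edge F L v w

/-- The replacement graph `G_L` as a simple graph on words of length `L`. -/
noncomputable def replGraph [Nonempty T] (F : System S T) (L : ℕ) : SimpleGraph (Word S L) where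
  Adj w v := w ≠ v ∧ adjW F L w v
  symm := by
    constructor
    intro w v h
    exact ⟨Ne.symm h.1, Or.symm h.2⟩
  loopless := by
    constructor
    intro w h
    exact h.1 rfl

/-- The degree of a word `w` in the replacement graph `G_L`: the number of `v` with
`{w,v} ∈ E_L`. -/
noncomputable def degGm [Nonempty T] (F : System S T) (L : ℕ) (w : Word S L) : ℕ :=
  {v : Word S L | adjW F L w v}.ncard

/-- `I_{t,+}`, the set of symbols occurring as the first coordinate of the gluing rule. -/
def Iplus (F : System S T) (t : T) : Set S := {a | ∃ b, F.glue t a b}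

/-- `I_{t,-}`, the set of symbols occurring as the second coordinate of the gluing rule. -/
def Iminus (F : System S T) (t : T) : Set S := {b | ∃ a, F.glue t a b}

/-- `I_{t,★}` where the orientation `★` is encoded by a boolean: `true = +`, `false = -`. -/
def Iset (F : System S T) (t : T) : Bool → Set S
  | true => Iplus F t
  | false => Iminus F t

/-- `I_{t,★}^{(m)} = (I_{t,★})^m ⊆ W_m`. -/
def IsetW (F : System S T) (t : T) (b : Bool) (m : ℕ) : Set (Word S m) :=
  {w | ∀ i, w i ∈ Iset F t b}

/-- The boundary `∂G_m = ⋃_{(t,★)} I_{t,★}^{(m)}`. -/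
def boundaryW (F : System S T) (m : ℕ) : Set (Word S m) :=
  ⋃ (t : T) (b : Bool), IsetW F t b m

/-- (GR1): every symbol has at most one gluing partner for each type and orientation. -/
def GR1 (F : System S T) : Prop :=
  ∀ (t : T) (s : S), {b | F.glue t s b}.Subsingleton ∧ {a | F.glue t a s}.Subsingleton

/-- (GR2): for no type, orientation and symbol are the gluing-partner count and the
corresponding oriented degree in `G₁` simultaneously nonzero. -/
def GR2 (F : System S T) : Prop :=
  ∀ (t : T) (s : S),
    ¬ ((∃ b, F.glue t s b) ∧ ∃ b, F.E s b ∧ F.typ s b = t) ∧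
    ¬ ((∃ a, F.glue t a s) ∧ ∃ a, F.E a s ∧ F.typ a s = t)

/-- (GR3): `I_{t,-} ∩ I_{t,+} = ∅` for every type `t`. -/
def GR3 (F : System S T) : Prop := ∀ t : T, Iminus F t ∩ Iplus F t = ∅

/-- Assumption (GR). -/
def GR (F : System S T) : Prop := GR1 F ∧ GR2 F ∧ GR3 F

/-- A path in the replacement graph `G_L`: a nonempty list of words with consecutive
entries joined by an edge. -/
def IsPath [Nonempty T] (F : System S T) (L : ℕ) (θ : List (Word S L)) : Prop :=
  θ ≠ [] ∧ θ.Chain' (adjW F L)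

open Classical in
/-- The projection `π_{L,k}` of a path: take length-`k` prefixes and remove consecutive
repetitions. -/
noncomputable def proj {k L : ℕ} (h : k ≤ L) (θ : List (Word S L)) : List (Word S k) :=
  (θ.map fun w => fun i => w (Fin.castLE h i)).destutter (· ≠ ·)

/-- An intersection path in `G_{m+1}`: a path admitting a compatible sequence of paths at
all levels with uniformly bounded lengths. -/
def IsIntersectionPath [Nonempty T] (F : System S T) (m : ℕ) (θ : List (Word S (m + 1))) :
    Prop :=
  IsPath F (m + 1) θ ∧
  ∃ Θ : (n : ℕ) → List (Word S (n + 1)),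
    Θ m = θ ∧ (∀ n, IsPath F (n + 1) (Θ n)) ∧
    (∀ (k n : ℕ) (h : k ≤ n), proj (Nat.succ_le_succ h) (Θ n) = Θ k) ∧
    ∃ C : ℕ, ∀ n, (Θ n).length ≤ C

/-- The fundamental neighbourhood `𝒩(w)`. -/
def nbhd [Nonempty T] (F : System S T) (m : ℕ) (w : Word S (m + 1)) :
    Set (Word S (m + 1)) :=
  {v | ∃ θ, IsIntersectionPath F m θ ∧ θ.head? = some w ∧ θ.getLast? = some v}

/-- Bounded geometry: the diameters of fundamental neighbourhoods are uniformly bounded. -/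
def BoundedGeometry [Nonempty T] (F : System S T) : Prop :=
  ∃ D : ℕ, ∀ (m : ℕ) (w : Word S (m + 1)), ∀ v₁ ∈ nbhd F m w, ∀ v₂ ∈ nbhd F m w,
    (replGraph F (m + 1)).dist v₁ v₂ ≤ D

/-- `|w ∧ v| < L` for words of length `L`: the words differ at some index below the last. -/
def ncRel {L : ℕ} (w v : Word S L) : Prop := ∃ j : Fin L, (j : ℕ) + 1 < L ∧ w j ≠ v j

/-- A non-collapsing path: consecutive vertices satisfy `|w ∧ v| < L`. -/
def NonCollapsing {L : ℕ} (θ : List (Word S L)) : Prop := θ.Chain' ncRel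

/-- A mapping between iterated graph systems. -/
structure Hom {S T S' T' : Type} (F : System S T) (F' : System S' T') where
  toFun : S → S'
  map_edge : ∀ x y, (F.E x y ∨ F.E y x) →
    (toFun x = toFun y ∨ F'.E (toFun x) (toFun y) ∨ F'.E (toFun y) (toFun x))
  glue_collapse : ∀ w1 v1, F.E w1 v1 → toFun w1 = toFun v1 →
    ∀ w2 v2, F.glue (F.typ w1 v1) w2 v2 → toFun w2 = toFun v2
  glue_fwd : ∀ w1 v1, F.E w1 v1 → F'.E (toFun w1) (toFun v1) →
    ∀ w2 v2, F.glue (F.typ w1 v1) w2 v2 →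
      F'.glue (F'.typ (toFun w1) (toFun v1)) (toFun w2) (toFun v2)
  glue_rev : ∀ w1 v1, F.E w1 v1 → F'.E (toFun v1) (toFun w1) →
    ∀ w2 v2, F.glue (F.typ w1 v1) w2 v2 →
      F'.glue (F'.typ (toFun v1) (toFun w1)) (toFun v2) (toFun w2)

/-- An isomorphism between iterated graph systems: a pair of mutually inverse mappings. -/
structure Iso {S T S' T' : Type} (F : System S T) (F' : System S' T') where
  hom : Hom F F'
  inv : Hom F' F
  left_inv : ∀ x, inv.toFun (hom.toFun x) = x
  right_inv : ∀ y, hom.toFun (inv.toFun y) = y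

/-- A flipping symmetry of type `t`. -/
def IsFlip (F : System S T) (t : T) (η : Iso F F) : Prop :=
  (∀ w ∈ Iplus F t, F.glue t w (η.hom.toFun w)) ∧
  (∀ v ∈ Iminus F t, F.glue t (η.hom.toFun v) v)

/-- The data of a reflection symmetry of an iterated graph system: an involutive
isomorphism together with the partition `S = C ∪ D ∪ Δ` satisfying (D1)-(D4). -/
structure ReflData (F : System S T) where
  iso : Iso F F
  C : Set S
  D : Set S
  invol : ∀ x, iso.hom.toFun (iso.hom.toFun x) = x
  C_not_fixed : ∀ x ∈ C, iso.hom.toFun x ≠ x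
  D_not_fixed : ∀ x ∈ D, iso.hom.toFun x ≠ x
  CD_disjoint : ∀ x, ¬ (x ∈ C ∧ x ∈ D)
  cover : ∀ x, x ∈ C ∨ x ∈ D ∨ iso.hom.toFun x = x
  image_C : iso.hom.toFun '' C = D
  edge_CD : ∀ x ∈ C, ∀ y ∈ D, (F.E x y ∨ F.E y x) → iso.hom.toFun x = y
  D2 : ∀ w1 v1, F.E w1 v1 → iso.hom.toFun v1 = v1 →
    (w1 ∈ C → Iminus F (F.typ w1 v1) ⊆ C ∪ {x | iso.hom.toFun x = x}) ∧
    (w1 ∈ D → Iminus F (F.typ w1 v1) ⊆ D ∪ {x | iso.hom.toFun x = x})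
  D3 : ∀ w1 v1, F.E w1 v1 → iso.hom.toFun w1 = w1 →
    (v1 ∈ C → Iplus F (F.typ w1 v1) ⊆ C ∪ {x | iso.hom.toFun x = x}) ∧
    (v1 ∈ D → Iplus F (F.typ w1 v1) ⊆ D ∪ {x | iso.hom.toFun x = x})
  D4 : ∀ w1 v1, F.E w1 v1 → iso.hom.toFun w1 = w1 → iso.hom.toFun v1 = v1 →
    ∀ w2 v2, F.glue (F.typ w1 v1) w2 v2 →
      (w2 ∈ C ∧ v2 ∈ C) ∨ (w2 ∈ D ∧ v2 ∈ D) ∨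
      (iso.hom.toFun w2 = w2 ∧ iso.hom.toFun v2 = v2)

/-- (D5): a reflection symmetry. -/
def IsRefl {F : System S T} (R : ReflData F) : Prop :=
  ∀ w1 v1, F.E w1 v1 → w1 ∈ R.C → v1 ∈ R.D →
    ∀ w2 v2, F.glue (F.typ w1 v1) w2 v2 → R.iso.hom.toFun w2 = v2

/-- (D5*): a separative reflection symmetry. -/
def IsSepRefl {F : System S T} (R : ReflData F) : Prop :=
  ∀ x ∈ R.C, ∀ y ∈ R.D, ¬ (F.E x y ∨ F.E y x)

/-- The coordinatewise action of a reflection symmetry on words. -/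
def wordMap {F : System S T} (R : ReflData F) {m : ℕ} (w : Word S m) : Word S m :=
  fun i => R.iso.hom.toFun (w i)

/-- The lifted set `C_α^{(m)}`: words whose first non-fixed coordinate lies in `C`. -/
def liftC {F : System S T} (R : ReflData F) (m : ℕ) : Set (Word S m) :=
  {w | ∃ k : Fin m, w k ∈ R.C ∧ ∀ j < k, R.iso.hom.toFun (w j) = w j}

/-- The lifted set `D_α^{(m)}`: words whose first non-fixed coordinate lies in `D`. -/
def liftD {F : System S T} (R : ReflData F) (m : ℕ) : Set (Word S m) :=
  {w | ∃ k : Fin m, w k ∈ R.D ∧ ∀ j < k, R.iso.hom.toFun (w j) = w j}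

end IGSP
namespace IGSP

variable {S T : Type}

/-- An antisymmetric function supported on the edges of a graph. -/
def Antisym {V : Type} (G : SimpleGraph V) (Φ : V → V → ℝ) : Prop :=
  (∀ x y, Φ x y = - Φ y x) ∧ ∀ x y, ¬ G.Adj x y → Φ x y = 0

/-- The divergence of `Φ` at a vertex. -/
noncomputable def fdiv {V : Type} (Φ : V → V → ℝ) (x : V) : ℝ := ∑ᶠ y, Φ x y

/-- A flow from `A` to `B`. -/
def IsFlow {V : Type} (G : SimpleGraph V) (A B : Set V) (Φ : V → V → ℝ) : Prop :=
  Antisym G Φ ∧ ∀ x, x ∉ A ∪ B → fdiv Φ x = 0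

/-- The total flow `I(Φ) = Σ_{x ∈ A} div Φ (x)`. -/
noncomputable def totalFlow {V : Type} (A : Set V) (Φ : V → V → ℝ) : ℝ :=
  ∑ᶠ x ∈ A, fdiv Φ x

/-- The `q`-energy `E_q(Φ) = Σ_{{x,y} ∈ E} |Φ(x,y)|^q` (each unordered edge counted once). -/
noncomputable def energy {V : Type} (q : ℝ) (Φ : V → V → ℝ) : ℝ :=
  (∑ᶠ x, ∑ᶠ y, |Φ x y| ^ q) / 2

/-- The degree of a vertex of a graph. -/
noncomputable def degOf {V : Type} (G : SimpleGraph V) (x : V) : ℕ := {y | G.Adj x y}.ncard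

/-- The maximal degree of a finite graph. -/
noncomputable def maxDeg {V : Type} [Fintype V] (G : SimpleGraph V) : ℕ :=
  Finset.univ.sup fun x => degOf G x

/-- The diameter of a finite graph (in the shortest-path metric). -/
noncomputable def gdiam {V : Type} [Fintype V] (G : SimpleGraph V) : ℕ :=
  Finset.univ.sup fun pr : V × V => G.dist pr.1 pr.2

/-- The set of vertices of a path. -/
def pathVerts {V : Type} (θ : List V) : Set V := {x | x ∈ θ}

/-- A density is admissible for a path family if it is nonnegative and its sum along
every path of the family is at least 1. -/
def Admissible {V : Type} (Θ : Set (List V)) (ρ : V → ℝ) : Prop :=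
  (∀ x, 0 ≤ ρ x) ∧ ∀ θ ∈ Θ, 1 ≤ ∑ᶠ x ∈ pathVerts θ, ρ x

/-- The discrete (vertex) `p`-modulus of a family of paths. -/
noncomputable def modulus {V : Type} (p : ℝ) (Θ : Set (List V)) : ℝ :=
  sInf {M | ∃ ρ : V → ℝ, Admissible Θ ρ ∧ M = ∑ᶠ x, ρ x ^ p}

/-- The `p`-resistance `E_q(A,B,G)`: infimal `q`-energy of unit flows from `A` to `B`. -/
noncomputable def resistance {V : Type} (q : ℝ) (G : SimpleGraph V) (A B : Set V) : ℝ :=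
  sInf {e | ∃ Φ, IsFlow G A B Φ ∧ totalFlow A Φ = 1 ∧ e = energy q Φ}

/-- The family `Θ_𝔞^{(m)}` of paths in `G_m` from `I_{t₁,★₁}^{(m)}` to `I_{t₂,★₂}^{(m)}`. -/
def ThetaIGS [Nonempty T] (F : System S T) (m : ℕ) (t₁ : T) (b₁ : Bool) (t₂ : T)
    (b₂ : Bool) : Set (List (Word S m)) :=
  {θ | IsPath F m θ ∧ (∃ w ∈ IsetW F t₁ b₁ m, θ.head? = some w) ∧
    ∃ v ∈ IsetW F t₂ b₂ m, θ.getLast? = some v}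

/-- `ℒ^{(m)}`, the collection of sets `I_{t,★}^{(m)}`. -/
def scriptL [Nonempty T] (F : System S T) (m : ℕ) : Set (Set (Word S m)) :=
  {A | ∃ (t : T) (b : Bool), A = IsetW F t b m}

/-- The added vertices `v_L` (for `L ∈ ℒ^{(m)}` and `v ∈ L`) of the graph `G̃_m`. -/
def AddedV [Nonempty T] (F : System S T) (m : ℕ) :=
  {pr : Set (Word S m) × Word S m // pr.1 ∈ scriptL F m ∧ pr.2 ∈ pr.1}

/-- The vertex set of the graph `G̃_m`. -/
def TildeV [Nonempty T] (F : System S T) (m : ℕ) := Word S m ⊕ AddedV F m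

/-- The graph `G̃_m`, obtained from `G_m` by attaching a pendant vertex `v_L` at every
`v ∈ L` for every `L ∈ ℒ^{(m)}`. -/
noncomputable def tildeG [Nonempty T] (F : System S T) (m : ℕ) : SimpleGraph (TildeV F m) where
  Adj x y :=
    match x, y with
    | Sum.inl w, Sum.inl v => w ≠ v ∧ adjW F m w v
    | Sum.inl w, Sum.inr pr => pr.1.2 = w
    | Sum.inr pr, Sum.inl w => pr.1.2 = w
    | Sum.inr _, Sum.inr _ => False
  symm := by
    constructor
    rintro (w | pr) (v | qr) h
    · exact ⟨Ne.symm h.1, Or.symm h.2⟩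
    · exact h
    · exact h
    · exact h.elim
  loopless := by
    constructor
    rintro (w | pr) h
    · exact h.1 rfl
    · exact h

/-- The set `L̃ = {v_L : v ∈ L}` of added vertices over `L`. -/
def tildeSet [Nonempty T] (F : System S T) (m : ℕ) (L : Set (Word S m)) :
    Set (TildeV F m) :=
  {x | ∃ pr : AddedV F m, pr.1.1 = L ∧ x = Sum.inr pr}

/-- A flow basis on `G̃_m`: a family of unit flows between the added vertex sets of all
pairs of distinct members of `ℒ^{(m)}`, satisfying (FB1)–(FB4). -/
structure FlowBasis [Nonempty T] (F : System S T) (ηfam : T → Iso F F) (m : ℕ) where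
  flow : (L₁ L₂ : Set (Word S m)) → L₁ ∈ scriptL F m → L₂ ∈ scriptL F m → L₁ ≠ L₂ →
    TildeV F m → TildeV F m → ℝ
  flow_isFlow : ∀ (L₁ L₂ : Set (Word S m)) (h₁ : L₁ ∈ scriptL F m) (h₂ : L₂ ∈ scriptL F m)
    (hne : L₁ ≠ L₂),
    IsFlow (tildeG F m) (tildeSet F m L₁) (tildeSet F m L₂) (flow L₁ L₂ h₁ h₂ hne)
  flow_unit : ∀ (L₁ L₂ : Set (Word S m)) (h₁ : L₁ ∈ scriptL F m) (h₂ : L₂ ∈ scriptL F m)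
    (hne : L₁ ≠ L₂), totalFlow (tildeSet F m L₁) (flow L₁ L₂ h₁ h₂ hne) = 1
  fb2 : ∀ (L₁ L₂ : Set (Word S m)) (h₁ : L₁ ∈ scriptL F m) (h₂ : L₂ ∈ scriptL F m)
    (hne : L₁ ≠ L₂) (pr : AddedV F m), pr.1.1 ≠ L₁ → pr.1.1 ≠ L₂ →
    flow L₁ L₂ h₁ h₂ hne (Sum.inr pr) (Sum.inl pr.1.2) = 0
  fb3_out : ∀ (L L₁ L₂ : Set (Word S m)) (hL : L ∈ scriptL F m) (h₁ : L₁ ∈ scriptL F m)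
    (h₂ : L₂ ∈ scriptL F m) (hne₁ : L ≠ L₁) (hne₂ : L ≠ L₂) (pr : AddedV F m),
    pr.1.1 = L →
    flow L L₁ hL h₁ hne₁ (Sum.inr pr) (Sum.inl pr.1.2) =
      flow L L₂ hL h₂ hne₂ (Sum.inr pr) (Sum.inl pr.1.2)
  fb3_in : ∀ (L L₁ L₂ : Set (Word S m)) (hL : L ∈ scriptL F m) (h₁ : L₁ ∈ scriptL F m)
    (h₂ : L₂ ∈ scriptL F m) (hne₁ : L₁ ≠ L) (hne₂ : L₂ ≠ L) (pr : AddedV F m),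
    pr.1.1 = L →
    flow L₁ L h₁ hL hne₁ (Sum.inl pr.1.2) (Sum.inr pr) =
      flow L₂ L h₂ hL hne₂ (Sum.inl pr.1.2) (Sum.inr pr)
  fb4_flip : ∀ (t : T) (b : Bool) (h₁ : IsetW F t b m ∈ scriptL F m)
    (h₂ : IsetW F t (!b) m ∈ scriptL F m) (hne : IsetW F t b m ≠ IsetW F t (!b) m)
    (pr qr : AddedV F m), pr.1.1 = IsetW F t b m → qr.1.1 = IsetW F t (!b) m →
    qr.1.2 = (fun i => (ηfam t).hom.toFun (pr.1.2 i)) →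
    flow (IsetW F t b m) (IsetW F t (!b) m) h₁ h₂ hne (Sum.inr pr) (Sum.inl pr.1.2) =
      flow (IsetW F t b m) (IsetW F t (!b) m) h₁ h₂ hne (Sum.inl qr.1.2) (Sum.inr qr)
  fb4_sym : ∀ (t : T) (b : Bool) (h₁ : IsetW F t b m ∈ scriptL F m)
    (h₂ : IsetW F t (!b) m ∈ scriptL F m) (hne : IsetW F t b m ≠ IsetW F t (!b) m)
    (hne' : IsetW F t (!b) m ≠ IsetW F t b m) (pr : AddedV F m),
    pr.1.1 = IsetW F t b m →
    flow (IsetW F t b m) (IsetW F t (!b) m) h₁ h₂ hne (Sum.inr pr) (Sum.inl pr.1.2) =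
      flow (IsetW F t (!b) m) (IsetW F t b m) h₂ h₁ hne' (Sum.inl pr.1.2) (Sum.inr pr)

/-- The `q`-energy of a flow basis: the maximal energy of its members. -/
noncomputable def basisEnergy [Nonempty T] {F : System S T} {ηfam : T → Iso F F} {m : ℕ}
    (q : ℝ) (FB : FlowBasis F ηfam m) : ℝ :=
  sSup {e | ∃ (L₁ L₂ : Set (Word S m)) (h₁ : L₁ ∈ scriptL F m) (h₂ : L₂ ∈ scriptL F m)
    (hne : L₁ ≠ L₂), e = energy q (FB.flow L₁ L₂ h₁ h₂ hne)}

open Classical in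
/-- The twisted flow `T_α(F)` of Proposition "Twist flow". -/
noncomputable def Talpha [Nonempty T] {F : System S T} {m : ℕ} (R : ReflData F)
    (L₁ L₂' : Set (Word S m)) (A : TildeV F m ≃ TildeV F m)
    (Φ : TildeV F m → TildeV F m → ℝ) : TildeV F m → TildeV F m → ℝ := fun x y =>
  if (∃ w, x = Sum.inl w ∧ wordMap R w = w) ∧ (∃ w, y = Sum.inl w ∧ wordMap R w = w) then
    Φ x y
  else if ((∃ w, x = Sum.inl w ∧ w ∈ liftC R m) ∨
        (∃ pr : AddedV F m, x = Sum.inr pr ∧ (pr.1.1 = L₁ ∨ pr.1.1 = L₂'))) ∨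
      ((∃ w, y = Sum.inl w ∧ w ∈ liftC R m) ∨
        (∃ pr : AddedV F m, y = Sum.inr pr ∧ (pr.1.1 = L₁ ∨ pr.1.1 = L₂'))) then
    Φ x y + Φ (A.symm x) (A.symm y)
  else 0

end IGSP
namespace IGSP

/-- The symbol set of the ambient cubical system: `{1,…,L}^d × {1,…,s}` (0-indexed). -/
abbrev CSym (d L s : ℕ) := (Fin d → Fin L) × Fin s

/-- The ambient edge relation of type `t_j`. -/
def ambE {d L s : ℕ} (j : Fin d) (w v : CSym d L s) : Prop :=
  (∀ i, i ≠ j → w.1 i = v.1 i) ∧ (v.1 j : ℕ) = (w.1 j : ℕ) + 1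

/-- The ambient gluing rule of type `t_j`. -/
def ambI {d L s : ℕ} (j : Fin d) (w v : CSym d L s) : Prop :=
  (∀ i, i ≠ j → w.1 i = v.1 i) ∧ (w.1 j : ℕ) = L - 1 ∧ (v.1 j : ℕ) = 0 ∧ w.2 = v.2

/-- A symbol lying on the `j`-axis edge of the cube: all other coordinates extremal
and label `1`. -/
def onAxis {d L s : ℕ} (j : Fin d) (w : CSym d L s) : Prop :=
  (∀ i, i ≠ j → ((w.1 i : ℕ) = 0 ∨ (w.1 i : ℕ) = L - 1)) ∧ (w.2 : ℕ) = 0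

/-- The coordinate reflection `η_j : c_j ↦ L + 1 - c_j`. -/
def etaMap {d L s : ℕ} (j : Fin d) (w : CSym d L s) : CSym d L s :=
  ⟨fun i => if i = j then ⟨L - 1 - (w.1 j : ℕ), by have := (w.1 j).isLt; omega⟩ else w.1 i,
    w.2⟩

/-- The diagonal reflection `α_{j,k}^+` exchanging coordinates `j` and `k`. -/
def swapMap {d L s : ℕ} (j k : Fin d) (w : CSym d L s) : CSym d L s :=
  ⟨fun i => if i = j then w.1 k else if i = k then w.1 j else w.1 i, w.2⟩

/-- The anti-diagonal reflection `α_{j,k}^-`. -/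
def aswapMap {d L s : ℕ} (j k : Fin d) (w : CSym d L s) : CSym d L s :=
  ⟨fun i =>
    if i = j then ⟨L - 1 - (w.1 k : ℕ), by have := (w.1 k).isLt; omega⟩
    else if i = k then ⟨L - 1 - (w.1 j : ℕ), by have := (w.1 j).isLt; omega⟩
    else w.1 i, w.2⟩

/-- A cubical iterated graph system: a sub-system of the ambient system `𝔉(d,L,s)`
satisfying the conditions (C1)–(C4). -/
structure CubicalIGS (d L s : ℕ) where
  hd : 1 ≤ d
  hL : 3 ≤ L
  hs : 1 ≤ s
  Symb : Set (CSym d L s)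
  sys : System (↥Symb) (Fin d)
  edge_amb : ∀ x y : ↥Symb, sys.E x y → ambE (sys.typ x y) x.1 y.1
  glue_amb : ∀ (j : Fin d) (x y : ↥Symb), sys.glue j x y → ambI j x.1 y.1
  C1 : ∀ w : CSym d L s, (∃ j, onAxis j w) → w ∈ Symb
  C2 : ∀ (j : Fin d) (x y : ↥Symb), onAxis j x.1 → onAxis j y.1 → ambE j x.1 y.1 →
    sys.E x y
  C3 : ∀ (j : Fin d) (x y : ↥Symb), onAxis j x.1 → onAxis j y.1 → ambI j x.1 y.1 →
    sys.glue j x y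
  C4_eta : ∀ j : Fin d, ∃ ψ : Iso sys sys,
    ∀ x : ↥Symb, (ψ.hom.toFun x : CSym d L s) = etaMap j x.1
  C4_plus : ∀ j k : Fin d, j ≠ k → ∃ ψ : Iso sys sys,
    ∀ x : ↥Symb, (ψ.hom.toFun x : CSym d L s) = swapMap j k x.1
  C4_minus : ∀ j k : Fin d, j ≠ k → ∃ ψ : Iso sys sys,
    ∀ x : ↥Symb, (ψ.hom.toFun x : CSym d L s) = aswapMap j k x.1

/-- The corner symbol `𝐤`: first coordinate `k`, all other coordinates `1`, label `1`. -/
def cornerSym {d L s : ℕ} (cub : CubicalIGS d L s) (k : Fin L) : ↥cub.Symb :=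
  ⟨⟨fun i => if (i : ℕ) = 0 then k else ⟨0, by have := k.isLt; omega⟩,
      ⟨0, by have := cub.hs; omega⟩⟩, by
    apply cub.C1
    refine ⟨⟨0, cub.hd⟩, fun i hi => ?_, rfl⟩
    have hiv : (i : ℕ) ≠ 0 := fun h => hi (Fin.ext h)
    left
    simp [hiv]⟩

end IGSP
namespace IGSP

/-- The edge relation of the Sierpiński gasket IGS. -/
abbrev gasketE (x y : Fin 3) : Prop :=
  (x = 0 ∧ y = 1) ∨ (x = 1 ∧ y = 2) ∨ (x = 0 ∧ y = 2)

/-- The Sierpiński gasket iterated graph system. -/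
noncomputable def gasket : System (Fin 3) (Fin 3) where
  E := gasketE
  not_both := by decide
  irrefl := by decide
  conn := by
    have hadj : ∀ a b : Fin 3, a ≠ b → gasketE a b ∨ gasketE b a := by decide
    intro x y
    rcases eq_or_ne x y with rfl | h
    · exact Relation.ReflTransGen.refl
    · exact Relation.ReflTransGen.single (hadj x y h)
  typ := fun x y => if x = 0 ∧ y = 1 then 0 else if x = 1 ∧ y = 2 then 1 else 2
  typ_surj := by decide
  glue := fun t x y =>
    (t = 0 ∧ x = 1 ∧ y = 0) ∨ (t = 1 ∧ x = 2 ∧ y = 1) ∨ (t = 2 ∧ x = 2 ∧ y = 0)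
  glue_nonempty := by decide

open Fin.NatCast in
/-- The pentagonal Sierpiński carpet iterated graph system. -/
noncomputable def pentagon : System (Fin 5) (Fin 5) where
  E := fun x y => y = x + 1
  not_both := by decide
  irrefl := by decide
  conn := by
    intro x y
    have key : ∀ (k : ℕ) (z : Fin 5),
        Relation.ReflTransGen (fun a b : Fin 5 => b = a + 1 ∨ a = b + 1) z (z + (k : Fin 5)) := by
      intro k
      induction k with
      | zero => intro z; simpa using Relation.ReflTransGen.refl
      | succ n ih =>
          intro z
          have h : ((n + 1 : ℕ) : Fin 5) = ((n : ℕ) : Fin 5) + 1 := by push_cast; ring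
          rw [h, ← add_assoc]
          exact (ih z).tail (Or.inl rfl)
    have h2 := key ((y - x : Fin 5) : ℕ) x
    rw [Fin.cast_val_eq_self] at h2
    have h3 : x + (y - x) = y := by abel
    rwa [h3] at h2
  typ := fun x _ => x
  typ_surj := fun t => ⟨t, t + 1, rfl, rfl⟩
  glue := fun t x y => (x = t + 1 ∧ y = t) ∨ (x = t + 2 ∧ y = t + 4)
  glue_nonempty := fun t => ⟨t + 1, t, Or.inl ⟨rfl, rfl⟩⟩

/-- The interval iterated graph system `𝔉(1, L)`. -/
noncomputable def intervalSys (L : ℕ) (hL : 3 ≤ L) : System (Fin L) Unit where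
  E x y := (y : ℕ) = (x : ℕ) + 1
  not_both := by intro x y h h'; omega
  irrefl := by intro x h; omega
  conn := by
    have key : ∀ (k : ℕ) (hk : k < L),
        Relation.ReflTransGen (fun a b : Fin L => ((b : ℕ) = (a : ℕ) + 1) ∨ ((a : ℕ) = (b : ℕ) + 1))
          ⟨0, by omega⟩ ⟨k, hk⟩ := by
      intro k
      induction k with
      | zero => intro hk; exact Relation.ReflTransGen.refl
      | succ n ih =>
          intro hk
          exact Relation.ReflTransGen.tail (ih (by omega)) (Or.inl rfl)
    intro x y
    have hsymm : Symmetric fun a b : Fin L => ((b : ℕ) = (a : ℕ) + 1) ∨ ((a : ℕ) = (b : ℕ) + 1) :=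
      fun a b h => h.symm
    have hx := key x.val x.isLt
    have hy := key y.val y.isLt
    simp only [Fin.eta] at hx hy
    exact Relation.ReflTransGen.trans (haveI : Std.Symm fun a b : Fin L => ((b : ℕ) = (a : ℕ) + 1) ∨ ((a : ℕ) = (b : ℕ) + 1) := ⟨fun a b h => hsymm h⟩; Std.Symm.symm _ _ hx) hy
  typ := fun _ _ => ()
  typ_surj := by
    intro t
    refine ⟨⟨0, by omega⟩, ⟨1, by omega⟩, rfl, ?_⟩
    cases t; rfl
  glue := fun _ x y => (x : ℕ) = L - 1 ∧ (y : ℕ) = 0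
  glue_nonempty := fun _ => ⟨⟨L - 1, by omega⟩, ⟨0, by omega⟩, rfl, rfl⟩

variable {S T : Type}

/-- A folding of `G_{k+n}` onto `w̃ · W_n`: a graph mapping into the induced subgraph on
`w̃ · W_n` which fixes `w̃ · W_n` pointwise. -/
def HasFolding [Nonempty T] (F : System S T) (k n : ℕ) (wt : Word S k) : Prop :=
  ∃ f : Word S (k + n) → Word S (k + n),
    (∀ x, ∃ u : Word S n, f x = Fin.append wt u) ∧
    (∀ u : Word S n, f (Fin.append wt u) = Fin.append wt u) ∧
    (∀ x y, adjW F (k + n) x y → f x = f y ∨ adjW F (k + n) (f x) (f y))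

end IGSP

namespace IGSP

section BGaux
set_option linter.unusedSectionVars false
variable [Nonempty T] (F : System S T)

lemma edge_zero_iff (w v : Word S 0) : ¬ edge F 0 w v := by
  simp only [edge, replData]; exact id

lemma edge_one_iff (w v : Word S 1) : edge F 1 w v ↔ F.E (w 0) (v 0) := by
  simp only [edge, replData]

lemma edge_succ_iff (L : ℕ) (w v : Word S (L + 2)) :
    edge F (L + 2) w v ↔
      (Fin.init w = Fin.init v ∧ F.E (w (Fin.last (L + 1))) (v (Fin.last (L + 1)))) ∨
      (edge F (L + 1) (Fin.init w) (Fin.init v) ∧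
        F.glue (etyp F (L + 1) (Fin.init w) (Fin.init v)) (w (Fin.last (L + 1)))
          (v (Fin.last (L + 1)))) := by
  simp only [edge, etyp, replData]

lemma etyp_succ_eq (L : ℕ) (w v : Word S (L + 2)) (h : Fin.init w = Fin.init v) :
    etyp F (L + 2) w v = F.typ (w (Fin.last (L + 1))) (v (Fin.last (L + 1))) := by
  simp only [etyp, replData]; rw [if_pos h]

lemma etyp_succ_ne (L : ℕ) (w v : Word S (L + 2)) (h : ¬ Fin.init w = Fin.init v) :
    etyp F (L + 2) w v = etyp F (L + 1) (Fin.init w) (Fin.init v) := by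
  simp only [etyp, replData]; rw [if_neg h]

lemma edge_irrefl : ∀ (n : ℕ) (w : Word S n), ¬ edge F n w w := by
  intro n
  induction n with
  | zero => exact fun w => edge_zero_iff F w w
  | succ n ih =>
    match n, ih with
    | 0, _ => intro w h; exact F.irrefl _ ((edge_one_iff F w w).1 h)
    | L + 1, ih =>
      intro w h
      rcases (edge_succ_iff F L w w).1 h with ⟨_, h2⟩ | ⟨h1, _⟩
      · exact F.irrefl _ h2
      · exact ih (Fin.init w) h1

def Decomp (n : ℕ) (w v : Word S n) (k : Fin n) : Prop :=
  (∀ p : Fin n, p < k → w p = v p) ∧ F.E (w k) (v k) ∧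
    ∀ p : Fin n, k < p → F.glue (F.typ (w k) (v k)) (w p) (v p)

lemma E_ne {x y : S} (h : F.E x y) : x ≠ y := fun he => F.irrefl y (he ▸ h)

lemma edge_decomp : ∀ (n : ℕ) (w v : Word S n), edge F n w v →
    ∃ k : Fin n, Decomp F n w v k ∧ etyp F n w v = F.typ (w k) (v k) := by
  intro n
  induction n with
  | zero => intro w v h; exact absurd h (edge_zero_iff F w v)
  | succ n ih =>
    match n, ih with
    | 0, _ =>
      intro w v h
      refine ⟨0, ⟨?_, (edge_one_iff F w v).1 h, ?_⟩, rfl⟩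
      · intro p hp
        have := p.isLt
        simp [Fin.lt_def] at hp
      · intro p hp
        have := p.isLt
        simp [Fin.lt_def] at hp
    | L + 1, ih =>
      intro w v h
      rcases (edge_succ_iff F L w v).1 h with ⟨h1, h2⟩ | ⟨h1, h2⟩
      · refine ⟨Fin.last (L + 1), ⟨?_, h2, ?_⟩, etyp_succ_eq F L w v h1⟩
        · intro p hp
          have hpv : (p : ℕ) < L + 1 := by simpa [Fin.lt_def] using hp
          have hcast : Fin.castSucc (⟨(p : ℕ), hpv⟩ : Fin (L + 1)) = p := by ext; simp
          have := congrFun h1 ⟨(p : ℕ), hpv⟩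
          simp only [Fin.init] at this
          rwa [hcast] at this
        · intro p hp
          have := p.isLt
          simp [Fin.lt_def] at hp
          omega
      · obtain ⟨k, ⟨hk1, hk2, hk3⟩, hty⟩ := ih (Fin.init w) (Fin.init v) h1
        have hne : Fin.init w ≠ Fin.init v := fun he => edge_irrefl F (L + 1) (Fin.init v) (he ▸ h1)
        refine ⟨k.castSucc, ⟨?_, hk2, ?_⟩, (etyp_succ_ne F L w v hne).trans hty⟩
        · intro p hp
          have hplt : (p : ℕ) < (k : ℕ) := by simpa [Fin.lt_def] using hp
          have hpv : (p : ℕ) < L + 1 := lt_of_lt_of_le hplt (by omega)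
          have hcast : Fin.castSucc (⟨(p : ℕ), hpv⟩ : Fin (L + 1)) = p := by ext; simp
          have := hk1 ⟨(p : ℕ), hpv⟩ (by simpa [Fin.lt_def] using hplt)
          simp only [Fin.init] at this
          rwa [hcast] at this
        · intro p hp
          have hklt : (k : ℕ) < (p : ℕ) := by simpa [Fin.lt_def] using hp
          by_cases hpl : (p : ℕ) = L + 1
          · have hplast : p = Fin.last (L + 1) := Fin.ext (by simpa using hpl)
            rw [hplast]
            exact hty ▸ h2
          · have hpv : (p : ℕ) < L + 1 := by have := p.isLt; omega
            have hcast : Fin.castSucc (⟨(p : ℕ), hpv⟩ : Fin (L + 1)) = p := by ext; simp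
            have := hk3 ⟨(p : ℕ), hpv⟩ (by simpa [Fin.lt_def] using hklt)
            simp only [Fin.init] at this
            rwa [hcast] at this

def CPseq (L : ℕ) (a b : ℕ → ℕ) (k : ℕ) : Prop :=
  (∀ p, p < k → a p = b p) ∧ b k = a k + 1 ∧ ∀ p, k < p → a p = L - 1 ∧ b p = 0

lemma CP_up_unique {L : ℕ} {a b c : ℕ → ℕ} {k k' : ℕ}
    (hb : ∀ p, b p < L) (hc : ∀ p, c p < L)
    (h1 : CPseq L a b k) (h2 : CPseq L a c k') : k = k' ∧ b = c := by
  have hkk : k = k' := by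
    by_contra hne
    rcases Nat.lt_or_ge k k' with hlt | hge
    · have ha := (h1.2.2 k' hlt).1
      have h2' := h2.2.1
      have := hc k'
      omega
    · have hlt : k' < k := by omega
      have ha := (h2.2.2 k hlt).1
      have h1' := h1.2.1
      have := hb k
      omega
  subst hkk
  refine ⟨rfl, funext fun p => ?_⟩
  rcases lt_trichotomy p k with h | h | h
  · rw [← h1.1 p h, h2.1 p h]
  · subst h; rw [h1.2.1, h2.2.1]
  · rw [(h1.2.2 p h).2, (h2.2.2 p h).2]

lemma CP_down_unique {L : ℕ} {a b c : ℕ → ℕ} {k k' : ℕ}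
    (h1 : CPseq L a b k) (h2 : CPseq L c b k') : k = k' ∧ a = c := by
  have hkk : k = k' := by
    by_contra hne
    rcases Nat.lt_or_ge k k' with hlt | hge
    · have hb := (h1.2.2 k' hlt).2
      have h2' := h2.2.1
      omega
    · have hlt : k' < k := by omega
      have hb := (h2.2.2 k hlt).2
      have h1' := h1.2.1
      omega
  subst hkk
  refine ⟨rfl, funext fun p => ?_⟩
  rcases lt_trichotomy p k with h | h | h
  · rw [h1.1 p h, ← h2.1 p h]
  · subst h
    have := h1.2.1
    have := h2.2.1
    omega
  · rw [(h1.2.2 p h).1, (h2.2.2 p h).1]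

lemma CP_chain_false {L : ℕ} {a b c : ℕ → ℕ} {k k' : ℕ} (hL : 3 ≤ L)
    (h1 : CPseq L a b k) (h2 : CPseq L b c k') : False := by
  have hb1 := (h1.2.2 (max k k' + 1) (by omega)).2
  have hb2 := (h2.2.2 (max k k' + 1) (by omega)).1
  omega

def InOrbit (L : ℕ) (A c : ℕ → ℕ) : Prop :=
  c = A ∨ (∃ k, CPseq L A c k) ∨ (∃ k, CPseq L c A k)

def isQpos (L : ℕ) (A : ℕ → ℕ) (p : ℕ) : Prop :=
  ∃ c, (∀ q, c q < L) ∧ (CPseq L A c p ∨ CPseq L c A p)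

lemma orbit_closure {L : ℕ} {A a c : ℕ → ℕ} {k : ℕ} (hL : 3 ≤ L)
    (hA : ∀ p, A p < L) (ha : ∀ p, a p < L) (hc : ∀ p, c p < L)
    (hmem : InOrbit L A a) (hstep : CPseq L a c k ∨ CPseq L c a k) :
    InOrbit L A c ∧ isQpos L A k := by
  rcases hmem with rfl | ⟨k0, h0⟩ | ⟨k0, h0⟩
  · rcases hstep with hs | hs
    · exact ⟨Or.inr (Or.inl ⟨k, hs⟩), ⟨c, hc, Or.inl hs⟩⟩
    · exact ⟨Or.inr (Or.inr ⟨k, hs⟩), ⟨c, hc, Or.inr hs⟩⟩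
  · rcases hstep with hs | hs
    · exact absurd (CP_chain_false hL h0 hs) (fun h => h)
    · obtain ⟨hk, hac⟩ := CP_down_unique h0 hs
      subst hk
      exact ⟨Or.inl hac.symm, ⟨a, ha, Or.inl h0⟩⟩
  · rcases hstep with hs | hs
    · obtain ⟨hk, hac⟩ := CP_up_unique hA hc h0 hs
      subst hk
      exact ⟨Or.inl hac.symm, ⟨a, ha, Or.inr h0⟩⟩
    · exact absurd (CP_chain_false hL hs h0) (fun h => h)

lemma orbit_off_unique {L : ℕ} {A c₁ c₂ : ℕ → ℕ} (hL : 3 ≤ L)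
    (h1 : ∀ p, c₁ p < L) (h2 : ∀ p, c₂ p < L)
    (m1 : InOrbit L A c₁) (m2 : InOrbit L A c₂) (n1 : c₁ ≠ A) (n2 : c₂ ≠ A) :
    c₁ = c₂ := by
  rcases m1 with rfl | ⟨k1, g1⟩ | ⟨k1, g1⟩
  · exact absurd rfl n1
  · rcases m2 with rfl | ⟨k2, g2⟩ | ⟨k2, g2⟩
    · exact absurd rfl n2
    · exact (CP_up_unique h1 h2 g1 g2).2
    · exact absurd (CP_chain_false hL g2 g1) (fun h => h)
  · rcases m2 with rfl | ⟨k2, g2⟩ | ⟨k2, g2⟩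
    · exact absurd rfl n2
    · exact absurd (CP_chain_false hL g1 g2) (fun h => h)
    · exact (CP_down_unique g1 g2).2

lemma isQpos_unique {L : ℕ} {A : ℕ → ℕ} {p p' : ℕ} (hL : 3 ≤ L) (hA : ∀ q, A q < L)
    (h1 : isQpos L A p) (h2 : isQpos L A p') : p = p' := by
  obtain ⟨c, hc, g1⟩ := h1
  obtain ⟨c', hc', g2⟩ := h2
  rcases g1 with g1 | g1 <;> rcases g2 with g2 | g2
  · exact (CP_up_unique hc hc' g1 g2).1
  · exact absurd (CP_chain_false hL g2 g1) (fun h => h)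
  · exact absurd (CP_chain_false hL g1 g2) (fun h => h)
  · exact (CP_down_unique g1 g2).1

end BGaux

section BGhelp
variable {S T : Type}

lemma adjW_ne [Nonempty T] (F : System S T) {n : ℕ} {x y : Word S n} (h : adjW F n x y) :
    x ≠ y := by
  rintro rfl
  rcases h with h | h <;> exact edge_irrefl F n x h

lemma walk_of_chain {V : Type} (G : SimpleGraph V) :
    ∀ (l : List V) (a b : V), l.head? = some a → l.getLast? = some b →
      l.Chain' G.Adj → ∃ p : G.Walk a b, ∀ x ∈ p.support, x ∈ l := by
  intro l
  induction l with
  | nil => intro a b ha _ _; simp at ha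
  | cons c l ih =>
    intro a b ha hb hch
    have hca : c = a := by simpa using ha
    subst hca
    cases l with
    | nil =>
      have hcb : c = b := by simpa using hb
      subst hcb
      exact ⟨SimpleGraph.Walk.nil, by simp⟩
    | cons e l' =>
      have hadj : G.Adj c e := (List.isChain_cons_cons.1 hch).1
      obtain ⟨p, hp⟩ := ih e b rfl (by simpa using hb) (List.isChain_cons_cons.1 hch).2
      refine ⟨SimpleGraph.Walk.cons hadj p, ?_⟩
      intro x hx
      rw [SimpleGraph.Walk.support_cons] at hx
      rcases List.mem_cons.1 hx with rfl | hx
      · exact List.mem_cons_self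
      · exact List.mem_cons_of_mem _ (hp x hx)

lemma proj_sublist {S : Type} {k LL : ℕ} (h : k ≤ LL) (θ : List (Word S LL)) :
    (proj h θ).Sublist (θ.map fun w => fun i : Fin k => w (Fin.castLE h i)) := by
  classical
  unfold proj
  exact List.destutter_sublist _ _

lemma nodup_length_le {α : Type} {l : List α} {A : Set α} (hA : A.Finite) (hnd : l.Nodup)
    (hsub : ∀ x ∈ l, x ∈ A) : l.length ≤ A.ncard := by
  classical
  rw [← List.toFinset_card_of_nodup hnd, Set.ncard_eq_toFinset_card A hA]
  apply Finset.card_le_card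
  intro x hx
  rw [Set.Finite.mem_toFinset]
  exact hsub x (List.mem_toFinset.1 hx)

end BGhelp


section BGfactor

/-- Along a chain of infinite words whose consecutive members are related by a
glued edge, each word is determined by, per coordinate, which of at most two digit
representations it uses and the label at the unique carry position. -/
lemma orbit_factor {d L s : ℕ} (cub : CubicalIGS d L s) (ℓ : ℕ) (X : ℕ → ℕ → ↥cub.Symb)
    (hstep : ∀ i : ℕ, i + 1 < ℓ → ∃ k,
      ((∀ p, p < k → X i p = X (i + 1) p) ∧ cub.sys.E (X i k) (X (i + 1) k) ∧
        ∀ p, k < p → cub.sys.glue (cub.sys.typ (X i k) (X (i + 1) k)) (X i p) (X (i + 1) p)) ∨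
      ((∀ p, p < k → X (i + 1) p = X i p) ∧ cub.sys.E (X (i + 1) k) (X i k) ∧
        ∀ p, k < p → cub.sys.glue (cub.sys.typ (X (i + 1) k) (X i k)) (X (i + 1) p) (X i p))) :
    ∃ g : (Fin d → Bool) × (Fin d → Fin s) → (ℕ → ↥cub.Symb),
      ∀ i, i < ℓ → ∃ c, X i = g c := by
  classical
  have hL3 : 3 ≤ L := cub.hL
  let dg : ℕ → Fin d → ℕ → ℕ := fun i j p => ((X i p).1.1 j : ℕ)
  let lb : ℕ → ℕ → Fin s := fun i p => (X i p).1.2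
  have hdb : ∀ i j p, dg i j p < L := fun i j p => ((X i p).1.1 j).isLt
  -- the invariant along the chain
  have hinv : ∀ i, i < ℓ →
      (∀ j, InOrbit L (dg 0 j) (dg i j)) ∧
      (∀ p, lb i p ≠ lb 0 p → ∃ j, isQpos L (dg 0 j) p) := by
    intro i
    induction i with
    | zero => exact fun _ => ⟨fun j => Or.inl rfl, fun p hp => absurd rfl hp⟩
    | succ i ih =>
      intro hi1
      have ihi := ih (by omega)
      obtain ⟨k, hsd⟩ := hstep i hi1
      -- In both orientations, extract the common data.
      have hdata : ∃ jt : Fin d,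
          (CPseq L (dg i jt) (dg (i + 1) jt) k ∨ CPseq L (dg (i + 1) jt) (dg i jt) k) ∧
          (∀ j, j ≠ jt → ∀ p, dg (i + 1) j p = dg i j p) ∧
          (∀ p, p ≠ k → lb (i + 1) p = lb i p) := by
        rcases hsd with ⟨hpre, hE, hglue⟩ | ⟨hpre, hE, hglue⟩
        · refine ⟨cub.sys.typ (X i k) (X (i + 1) k), Or.inl ⟨?_, ?_, ?_⟩, ?_, ?_⟩
          · intro p hp
            exact congrArg (fun z : ↥cub.Symb => ((z.1.1 _ : Fin L) : ℕ)) (hpre p hp)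
          · exact (cub.edge_amb _ _ hE).2
          · intro p hp
            have hI := cub.glue_amb _ _ _ (hglue p hp)
            exact ⟨hI.2.1, hI.2.2.1⟩
          · intro j hj p
            rcases lt_trichotomy p k with h | h | h
            · exact (congrArg (fun z : ↥cub.Symb => ((z.1.1 j : Fin L) : ℕ)) (hpre p h)).symm
            · subst h
              exact (congrArg Fin.val ((cub.edge_amb _ _ hE).1 j hj)).symm
            · exact (congrArg Fin.val ((cub.glue_amb _ _ _ (hglue p h)).1 j hj)).symm
          · intro p hp
            rcases lt_trichotomy p k with h | h | h
            · exact (congrArg (fun z : ↥cub.Symb => z.1.2) (hpre p h)).symm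
            · exact absurd h hp
            · exact ((cub.glue_amb _ _ _ (hglue p h)).2.2.2).symm
        · refine ⟨cub.sys.typ (X (i + 1) k) (X i k), Or.inr ⟨?_, ?_, ?_⟩, ?_, ?_⟩
          · intro p hp
            exact congrArg (fun z : ↥cub.Symb => ((z.1.1 _ : Fin L) : ℕ)) (hpre p hp)
          · exact (cub.edge_amb _ _ hE).2
          · intro p hp
            have hI := cub.glue_amb _ _ _ (hglue p hp)
            exact ⟨hI.2.1, hI.2.2.1⟩
          · intro j hj p
            rcases lt_trichotomy p k with h | h | h
            · exact congrArg (fun z : ↥cub.Symb => ((z.1.1 j : Fin L) : ℕ)) (hpre p h)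
            · subst h
              exact congrArg Fin.val ((cub.edge_amb _ _ hE).1 j hj)
            · exact congrArg Fin.val ((cub.glue_amb _ _ _ (hglue p h)).1 j hj)
          · intro p hp
            rcases lt_trichotomy p k with h | h | h
            · exact congrArg (fun z : ↥cub.Symb => z.1.2) (hpre p h)
            · exact absurd h hp
            · exact (cub.glue_amb _ _ _ (hglue p h)).2.2.2
      obtain ⟨jt, hcp, hoth, hlab⟩ := hdata
      have hclose := orbit_closure (A := dg 0 jt) hL3 (hdb 0 jt) (hdb i jt) (hdb (i + 1) jt)
        (ihi.1 jt) hcp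
      refine ⟨fun j => ?_, fun p hp => ?_⟩
      · by_cases hj : j = jt
        · subst hj; exact hclose.1
        · have hfun : dg (i + 1) j = dg i j := funext (hoth j hj)
          rw [hfun]; exact ihi.1 j
      · by_cases hpk : p = k
        · subst hpk; exact ⟨jt, hclose.2⟩
        · rw [hlab p hpk] at hp; exact ihi.2 p hp
  -- carry positions
  let qp : Fin d → ℕ := fun j => if h : ∃ p, isQpos L (dg 0 j) p then Classical.choose h else 0
  have hqp : ∀ j p, isQpos L (dg 0 j) p → qp j = p := by
    intro j p hp
    have hex : ∃ p, isQpos L (dg 0 j) p := ⟨p, hp⟩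
    show dite _ _ _ = p
    rw [dif_pos hex]
    exact isQpos_unique hL3 (hdb 0 j) (Classical.choose_spec hex) hp
  -- classifier
  let φ : ℕ → (Fin d → Bool) × (Fin d → Fin s) := fun i =>
    ⟨fun j => if dg i j = dg 0 j then true else false, fun j => lb i (qp j)⟩
  have hcong : ∀ i i', i < ℓ → i' < ℓ → φ i = φ i' → X i = X i' := by
    intro i i' hi hi' hφ
    have hdg : ∀ j, dg i j = dg i' j := by
      intro j
      have hb := congrFun (congrArg Prod.fst hφ) j
      simp only [φ] at hb
      by_cases h1 : dg i j = dg 0 j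
      · have h2 : dg i' j = dg 0 j := by
          by_contra h2
          rw [if_pos h1, if_neg h2] at hb
          exact Bool.noConfusion hb
        rw [h1, h2]
      · have h2 : ¬ dg i' j = dg 0 j := by
          intro h2
          rw [if_neg h1, if_pos h2] at hb
          exact Bool.noConfusion hb
        exact orbit_off_unique hL3 (hdb i j) (hdb i' j) ((hinv i hi).1 j) ((hinv i' hi').1 j) h1 h2
    have hlb : ∀ q : ℕ, lb i q = lb i' q := by
      intro q
      by_cases h1 : lb i q = lb 0 q
      · by_cases h2 : lb i' q = lb 0 q
        · rw [h1, h2]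
        · obtain ⟨j, hj⟩ := (hinv i' hi').2 q h2
          have hq := hqp j q hj
          have hb := congrFun (congrArg Prod.snd hφ) j
          simp only [φ] at hb
          rw [hq] at hb
          exact hb
      · obtain ⟨j, hj⟩ := (hinv i hi).2 q h1
        have hq := hqp j q hj
        have hb := congrFun (congrArg Prod.snd hφ) j
        simp only [φ] at hb
        rw [hq] at hb
        exact hb
    funext p
    refine Subtype.ext (Prod.ext ?_ (hlb p))
    funext j
    exact Fin.val_injective (congrFun (hdg j) p)
  refine ⟨fun c => if h : ∃ i, i < ℓ ∧ φ i = c then X (Classical.choose h) else X 0, ?_⟩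
  intro i hi
  refine ⟨φ i, ?_⟩
  have hex : ∃ i', i' < ℓ ∧ φ i' = φ i := ⟨i, hi, rfl⟩
  show X i = if h : ∃ i', i' < ℓ ∧ φ i' = φ i then X (Classical.choose h) else X 0
  rw [dif_pos hex]
  obtain ⟨hi', hφ⟩ := Classical.choose_spec hex
  exact hcong i _ hi hi' hφ.symm

end BGfactor


section BGkey

set_option maxHeartbeats 2000000 in
set_option synthInstance.maxHeartbeats 400000 in
/-- The vertices of an intersection path all lie in a set of at most `2^d * s^d` words. -/
lemma key_bound {d L s : ℕ} (cub : CubicalIGS d L s) [Nonempty (Fin d)] (m : ℕ)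
    (θ : List (Word (↥cub.Symb) (m + 1))) (hθ : IsIntersectionPath cub.sys m θ) :
    ∃ A : Set (Word (↥cub.Symb) (m + 1)),
      A.Finite ∧ A.ncard ≤ 2 ^ d * s ^ d ∧ ∀ u ∈ θ, u ∈ A := by
  classical
  obtain ⟨hpath, Θ, hΘm, hΘpath, hΘproj, C, hC⟩ := hθ
  set F := cub.sys with hF
  -- lengths are monotone in the level
  have hmono : ∀ k n : ℕ, k ≤ n → (Θ k).length ≤ (Θ n).length := by
    intro k n hkn
    have h := hΘproj k n hkn
    have h2 : (Θ k).Sublist ((Θ n).map fun w => fun i : Fin (k + 1) =>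
        w (Fin.castLE (Nat.succ_le_succ hkn) i)) := by
      rw [← h]
      exact proj_sublist _ _
    simpa using h2.length_le
  -- a level past which the lengths stabilize
  have hNex : ∃ N, m ≤ N ∧ ∀ n, N ≤ n → (Θ n).length = (Θ N).length := by
    by_contra hcon
    push_neg at hcon
    have grow : ∀ N, m ≤ N → ∃ n, N ≤ n ∧ (Θ N).length < (Θ n).length := by
      intro N hmN
      obtain ⟨n, hn1, hn2⟩ := hcon N hmN
      exact ⟨n, hn1, lt_of_le_of_ne (hmono N n hn1) (fun h => hn2 h.symm)⟩
    have hgrow2 : ∀ j : ℕ, ∃ n, m ≤ n ∧ j ≤ (Θ n).length := by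
      intro j
      induction j with
      | zero => exact ⟨m, le_refl m, Nat.zero_le _⟩
      | succ j ihj =>
        obtain ⟨n, hn1, hn2⟩ := ihj
        obtain ⟨n', hn'1, hn'2⟩ := grow n hn1
        exact ⟨n', le_trans hn1 hn'1, by omega⟩
    obtain ⟨n, _, hn⟩ := hgrow2 (C + 1)
    exact absurd (hC n) (by omega)
  obtain ⟨N, hmN, hNstab⟩ := hNex
  set ℓ := (Θ N).length with hℓdef
  have hlenc : ∀ n, N ≤ n → (Θ n).length = ℓ := hNstab
  have hℓpos : 0 < ℓ := List.length_pos_iff.2 (hΘpath N).1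
  -- entrywise compatibility between stabilized levels
  have hentry : ∀ a b : ℕ, N ≤ a → ∀ (hab : a ≤ b) (i : ℕ) (hia : i < (Θ a).length)
      (hib : i < (Θ b).length) (p : Fin (a + 1)),
      ((Θ a)[i]'hia) p = ((Θ b)[i]'hib) (Fin.castLE (Nat.succ_le_succ hab) p) := by
    intro a b hNa hab i hia hib p
    have hproj := hΘproj a b hab
    have hsub : (Θ a).Sublist ((Θ b).map fun w => fun q : Fin (a + 1) =>
        w (Fin.castLE (Nat.succ_le_succ hab) q)) := by
      rw [← hproj]
      exact proj_sublist _ _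
    have hlen : (Θ a).length = ((Θ b).map fun w => fun q : Fin (a + 1) =>
        w (Fin.castLE (Nat.succ_le_succ hab) q)).length := by
      simp [hlenc a hNa, hlenc b (le_trans hNa hab)]
    have heq := hsub.eq_of_length hlen
    have h1 := List.getElem_of_eq heq (i := i) hia
    rw [List.getElem_map] at h1
    exact congrFun h1 p
  -- the infinite words
  have hs0 : Nonempty (↥cub.Symb) := ⟨cornerSym cub ⟨0, by have := cub.hL; omega⟩⟩
  let X : ℕ → ℕ → ↥cub.Symb := fun i p =>
    if h : i < ℓ then
      ((Θ (max N p))[i]'(by rw [hlenc _ (le_max_left _ _)]; exact h))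
        ⟨p, Nat.lt_succ_of_le (le_max_right _ _)⟩
    else Classical.arbitrary _
  have hXdef : ∀ (i : ℕ), i < ℓ → ∀ (n : ℕ), N ≤ n → ∀ (p : Fin (n + 1))
      (hi : i < (Θ n).length), X i ↑p = ((Θ n)[i]'hi) p := by
    intro i hiℓ n hn p hi
    show dite _ _ _ = _
    rw [dif_pos hiℓ]
    have hmb : max N (p : ℕ) ≤ n := max_le hn (by omega)
    have h := hentry (max N (p : ℕ)) n (le_max_left _ _) hmb i
      (by rw [hlenc _ (le_max_left _ _)]; exact hiℓ) hi
      ⟨(p : ℕ), Nat.lt_succ_of_le (le_max_right _ _)⟩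
    rw [h]
    exact congrArg _ (Fin.ext rfl)
  -- consecutive entries give steps of infinite words
  have hstep : ∀ i : ℕ, i + 1 < ℓ → ∃ k,
      ((∀ p, p < k → X i p = X (i + 1) p) ∧ F.E (X i k) (X (i + 1) k) ∧
        ∀ p, k < p → F.glue (F.typ (X i k) (X (i + 1) k)) (X i p) (X (i + 1) p)) ∨
      ((∀ p, p < k → X (i + 1) p = X i p) ∧ F.E (X (i + 1) k) (X i k) ∧
        ∀ p, k < p → F.glue (F.typ (X (i + 1) k) (X i k)) (X (i + 1) p) (X i p)) := by
    intro i hi1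
    have hiℓ : i < ℓ := by omega
    -- adjacency at each level
    have hadjn : ∀ n, N ≤ n → ∀ (hi : i < (Θ n).length) (hi' : i + 1 < (Θ n).length),
        adjW F (n + 1) ((Θ n)[i]'hi) ((Θ n)[i + 1]'hi') := by
      intro n hn hi hi'
      have hch : (Θ n).IsChain (adjW F (n + 1)) := (hΘpath n).2
      rw [List.isChain_iff_getElem] at hch
      have h := hch i (by rw [hlenc n hn]; omega)
      simpa [List.get_eq_getElem] using h
    -- a position where the words differ
    have hPex : ∃ p : ℕ, X i p ≠ X (i + 1) p := by
      have hiN : i < (Θ N).length := by omega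
      have hi1N : i + 1 < (Θ N).length := hi1
      have hne : ((Θ N)[i]'hiN) ≠ ((Θ N)[i + 1]'hi1N) := by
        intro he
        have hadj := hadjn N (le_refl N) hiN hi1N
        rw [he] at hadj
        exact adjW_ne F hadj rfl
      obtain ⟨q, hq⟩ := Function.ne_iff.1 hne
      refine ⟨(q : ℕ), ?_⟩
      rw [hXdef i hiℓ N (le_refl N) q hiN, hXdef (i + 1) hi1 N (le_refl N) q hi1N]
      exact hq
    set k := Nat.find hPex with hkdef
    have hkspec : X i k ≠ X (i + 1) k := Nat.find_spec hPex
    have hkmin : ∀ p, p < k → X i p = X (i + 1) p := by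
      intro p hp
      by_contra hne
      exact absurd (Nat.find_min' hPex hne) (by omega)
    have hkN : k ≤ N := by
      obtain ⟨q, hq⟩ : ∃ q : Fin (N + 1), X i ↑q ≠ X (i + 1) ↑q := by
        have hiN : i < (Θ N).length := by omega
        have hi1N : i + 1 < (Θ N).length := hi1
        have hne : ((Θ N)[i]'hiN) ≠ ((Θ N)[i + 1]'hi1N) := by
          intro he
          have hadj := hadjn N (le_refl N) hiN hi1N
          rw [he] at hadj
          exact adjW_ne F hadj rfl
        obtain ⟨q, hq⟩ := Function.ne_iff.1 hne
        refine ⟨q, ?_⟩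
        rw [hXdef i hiℓ N (le_refl N) q hiN, hXdef (i + 1) hi1 N (le_refl N) q hi1N]
        exact hq
      have := Nat.find_min' hPex hq
      omega
    -- per-level decompositions
    have hlev : ∀ n, N ≤ n →
        (F.E (X i k) (X (i + 1) k) ∧ ∀ p, k < p → p ≤ n →
          F.glue (F.typ (X i k) (X (i + 1) k)) (X i p) (X (i + 1) p)) ∨
        (F.E (X (i + 1) k) (X i k) ∧ ∀ p, k < p → p ≤ n →
          F.glue (F.typ (X (i + 1) k) (X i k)) (X (i + 1) p) (X i p)) := by
      intro n hn
      have hiℓ' : i < (Θ n).length := by rw [hlenc n hn]; omega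
      have hi1ℓ' : i + 1 < (Θ n).length := by rw [hlenc n hn]; omega
      have hXn : ∀ p : Fin (n + 1), ((Θ n)[i]'hiℓ') p = X i ↑p :=
        fun p => (hXdef i hiℓ n hn p hiℓ').symm
      have hYn : ∀ p : Fin (n + 1), ((Θ n)[i + 1]'hi1ℓ') p = X (i + 1) ↑p :=
        fun p => (hXdef (i + 1) hi1 n hn p hi1ℓ').symm
      have hkn : k < n + 1 := by omega
      rcases hadjn n hn hiℓ' hi1ℓ' with hE | hE
      · obtain ⟨kf, ⟨hd1, hd2, hd3⟩, _⟩ := edge_decomp F (n + 1) _ _ hE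
        have hkf : (kf : ℕ) = k := by
          have h1 : X i ↑kf ≠ X (i + 1) ↑kf := by
            rw [← hXn kf, ← hYn kf]
            exact E_ne F hd2
          have h2 : k ≤ (kf : ℕ) := Nat.find_min' hPex h1
          have h3 : ¬ (k < (kf : ℕ)) := by
            intro hlt
            have h4 := hd1 ⟨k, hkn⟩ (by rw [Fin.lt_def]; exact hlt)
            rw [hXn ⟨k, hkn⟩, hYn ⟨k, hkn⟩] at h4
            exact hkspec h4
          omega
        left
        have hkfe : kf = ⟨k, hkn⟩ := Fin.ext hkf
        subst hkfe
        rw [hXn ⟨k, hkn⟩, hYn ⟨k, hkn⟩] at hd2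
        refine ⟨hd2, ?_⟩
        intro p hkp hpn
        have hpfin : p < n + 1 := by omega
        have h5 := hd3 ⟨p, hpfin⟩ (by rw [Fin.lt_def]; exact hkp)
        rw [hXn ⟨k, hkn⟩, hYn ⟨k, hkn⟩, hXn ⟨p, hpfin⟩, hYn ⟨p, hpfin⟩] at h5
        exact h5
      · obtain ⟨kf, ⟨hd1, hd2, hd3⟩, _⟩ := edge_decomp F (n + 1) _ _ hE
        have hkf : (kf : ℕ) = k := by
          have h1 : X i ↑kf ≠ X (i + 1) ↑kf := by
            rw [← hXn kf, ← hYn kf]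
            exact (E_ne F hd2).symm
          have h2 : k ≤ (kf : ℕ) := Nat.find_min' hPex h1
          have h3 : ¬ (k < (kf : ℕ)) := by
            intro hlt
            have h4 := hd1 ⟨k, hkn⟩ (by rw [Fin.lt_def]; exact hlt)
            rw [hXn ⟨k, hkn⟩, hYn ⟨k, hkn⟩] at h4
            exact hkspec h4.symm
          omega
        right
        have hkfe : kf = ⟨k, hkn⟩ := Fin.ext hkf
        subst hkfe
        rw [hXn ⟨k, hkn⟩, hYn ⟨k, hkn⟩] at hd2
        refine ⟨hd2, ?_⟩
        intro p hkp hpn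
        have hpfin : p < n + 1 := by omega
        have h5 := hd3 ⟨p, hpfin⟩ (by rw [Fin.lt_def]; exact hkp)
        rw [hXn ⟨k, hkn⟩, hYn ⟨k, hkn⟩, hXn ⟨p, hpfin⟩, hYn ⟨p, hpfin⟩] at h5
        exact h5
    rcases hlev N (le_refl N) with hbase | hbase
    · refine ⟨k, Or.inl ⟨hkmin, hbase.1, ?_⟩⟩
      intro p hkp
      rcases hlev (max N p) (le_max_left _ _) with h | h
      · exact h.2 p hkp (le_max_right _ _)
      · exact absurd hbase.1 (F.not_both _ _ h.1)
    · refine ⟨k, Or.inr ⟨fun p hp => (hkmin p hp).symm, hbase.1, ?_⟩⟩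
      intro p hkp
      rcases hlev (max N p) (le_max_left _ _) with h | h
      · exact absurd hbase.1 (F.not_both _ _ h.1)
      · exact h.2 p hkp (le_max_right _ _)
  -- factor through the classifier
  obtain ⟨g, hg⟩ := orbit_factor cub ℓ X hstep
  refine ⟨Set.range (fun c => (fun p : Fin (m + 1) => g c ↑p : Word (↥cub.Symb) (m + 1))),
    Set.finite_range _, ?_, ?_⟩
  · have h1 : Set.range (fun c => (fun p : Fin (m + 1) => g c ↑p : Word (↥cub.Symb) (m + 1))) =
        (fun c => (fun p : Fin (m + 1) => g c ↑p : Word (↥cub.Symb) (m + 1))) '' Set.univ := by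
      rw [Set.image_univ]
    rw [h1]
    calc ((fun c => (fun p : Fin (m + 1) => g c ↑p : Word (↥cub.Symb) (m + 1))) ''
          Set.univ).ncard ≤ (Set.univ : Set ((Fin d → Bool) × (Fin d → Fin s))).ncard :=
        Set.ncard_image_le Set.finite_univ
      _ = 2 ^ d * s ^ d := by
        rw [Set.ncard_univ, Nat.card_eq_fintype_card, Fintype.card_prod,
          Fintype.card_fun, Fintype.card_fun, Fintype.card_bool, Fintype.card_fin,
          Fintype.card_fin]
  · intro u hu
    rw [← hΘm] at hu
    have hsub : (Θ m).Sublist ((Θ N).map fun w => fun q : Fin (m + 1) =>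
        w (Fin.castLE (Nat.succ_le_succ hmN) q)) := by
      rw [← hΘproj m N hmN]
      exact proj_sublist _ _
    have hu2 := hsub.subset hu
    obtain ⟨wN, hwN, hwu⟩ := List.mem_map.1 hu2
    obtain ⟨i, hi, hieq⟩ := List.mem_iff_getElem.1 hwN
    have hiℓ : i < ℓ := by omega
    obtain ⟨c, hc⟩ := hg i hiℓ
    refine ⟨c, ?_⟩
    show (fun p : Fin (m + 1) => g c ↑p) = u
    rw [← hc]
    funext p
    have hplt : (p : ℕ) < N + 1 := by omega
    have h1 := hXdef i hiℓ N (le_refl N) ⟨(p : ℕ), hplt⟩ hi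
    have h2 : Fin.castLE (Nat.succ_le_succ hmN) p = ⟨(p : ℕ), hplt⟩ := Fin.ext rfl
    have h3 : u p = wN (Fin.castLE (Nat.succ_le_succ hmN) p) := (congrFun hwu p).symm
    show X i ↑p = u p
    rw [h3, h2, ← hieq]
    exact h1

end BGkey

/-- Every cubical iterated graph system is of bounded geometry. -/
theorem statement10 (d L s : ℕ) (cub : CubicalIGS d L s) :
    letI : Nonempty (Fin d) := ⟨⟨0, cub.hd⟩⟩
    BoundedGeometry cub.sys := by
  letI : Nonempty (Fin d) := ⟨⟨0, cub.hd⟩⟩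
  show BoundedGeometry cub.sys
  classical
  refine ⟨2 * (2 ^ d * s ^ d), ?_⟩
  intro m w v₁ hv₁ v₂ hv₂
  obtain ⟨θ₁, hIP₁, hh₁, hl₁⟩ := hv₁
  obtain ⟨θ₂, hIP₂, hh₂, hl₂⟩ := hv₂
  obtain ⟨A₁, hf₁, hc₁, hm₁⟩ := key_bound cub m θ₁ hIP₁
  obtain ⟨A₂, hf₂, hc₂, hm₂⟩ := key_bound cub m θ₂ hIP₂
  have hch : ∀ θ : List (Word (↥cub.Symb) (m + 1)), IsPath cub.sys (m + 1) θ →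
      θ.Chain' (replGraph cub.sys (m + 1)).Adj := by
    intro θ hθ
    refine hθ.2.imp ?_
    intro a b hab
    exact ⟨adjW_ne cub.sys hab, hab⟩
  obtain ⟨p₁, hp₁⟩ := walk_of_chain (replGraph cub.sys (m + 1)) θ₁ w v₁ hh₁ hl₁
    (hch θ₁ hIP₁.1)
  obtain ⟨p₂, hp₂⟩ := walk_of_chain (replGraph cub.sys (m + 1)) θ₂ w v₂ hh₂ hl₂
    (hch θ₂ hIP₂.1)
  set W := p₁.reverse.append p₂ with hWdef
  have hdist := SimpleGraph.dist_le W.bypass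
  have hnd := (SimpleGraph.Walk.bypass_isPath W).support_nodup
  have hsup : ∀ x ∈ W.bypass.support, x ∈ A₁ ∪ A₂ := by
    intro x hx
    have hx2 := SimpleGraph.Walk.support_bypass_subset W hx
    rw [hWdef, SimpleGraph.Walk.support_append] at hx2
    rcases List.mem_append.1 hx2 with h | h
    · rw [SimpleGraph.Walk.support_reverse] at h
      exact Or.inl (hm₁ x (hp₁ x (List.mem_reverse.1 h)))
    · exact Or.inr (hm₂ x (hp₂ x (List.mem_of_mem_tail h)))
  have hlen := nodup_length_le (hf₁.union hf₂) hnd hsup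
  have hcard := Set.ncard_union_le A₁ A₂
  have hW : W.bypass.support.length = W.bypass.length + 1 :=
    SimpleGraph.Walk.length_support _
  have hfinal : W.bypass.length ≤ 2 * (2 ^ d * s ^ d) := by omega
  exact le_trans hdist hfinal

end IGSP
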